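/- Let (u_n) be a sequence of continuously differentiable, compactly supported functions u_n : ℝ → ℝ such that ‖u_n g − g‖_∞ → 0 for every continuous function g : ℝ → ℝ vanishing at infinity, and such that ‖u_n'‖_∞ → 0. Let f(x) = sin(x³)/(1 + x²). Then f is a bounded Lipschitz function vanishing at infinity, but the Lipschitz seminorms of f − u_n·f do not tend to zero; equivalently, ‖(f − u_n f)'‖_∞ does not converge to 0. Hence (u_n) is not an approximate unit for the Lipschitz norm ‖·‖_∞ + Lip(·). -/

import Mathlib

open Filter Topology

private lemma aux_hasDerivAt (x : ℝ) :
    HasDerivAt (fun y : ℝ => Real.sin (y ^ 3) / (1 + y ^ 2))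
      ((Real.cos (x ^ 3) * (3 * x ^ 2) * (1 + x ^ 2) - Real.sin (x ^ 3) * (2 * x)) / (1 + x ^ 2) ^ 2) x := by
  have h1 : HasDerivAt (fun y : ℝ => Real.sin (y ^ 3)) (Real.cos (x ^ 3) * (3 * x ^ 2)) x := by
    have := (Real.hasDerivAt_sin (x ^ 3)).comp x (hasDerivAt_pow 3 x)
    exact this.congr_deriv (by ring)
  have h2 : HasDerivAt (fun y : ℝ => 1 + y ^ 2) (2 * x) x := by
    simpa using (hasDerivAt_pow 2 x).const_add 1
  exact h1.div h2 (by positivity)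

private lemma aux_deriv (x : ℝ) :
    deriv (fun y : ℝ => Real.sin (y ^ 3) / (1 + y ^ 2)) x
      = (Real.cos (x ^ 3) * (3 * x ^ 2) * (1 + x ^ 2) - Real.sin (x ^ 3) * (2 * x)) / (1 + x ^ 2) ^ 2 :=
  (aux_hasDerivAt x).deriv

private lemma aux_deriv_bound (x : ℝ) :
    |deriv (fun y : ℝ => Real.sin (y ^ 3) / (1 + y ^ 2)) x| ≤ 4 := by
  rw [aux_deriv, abs_div]
  have hden : (0:ℝ) < (1 + x ^ 2) ^ 2 := by positivity
  rw [abs_of_pos hden, div_le_iff₀ hden, abs_le]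
  constructor <;>
    nlinarith [Real.neg_one_le_cos (x^3), Real.cos_le_one (x^3), Real.neg_one_le_sin (x^3),
      Real.sin_le_one (x^3), sq_nonneg x, sq_nonneg (x-1), sq_nonneg (x+1), sq_nonneg (x^2),
      mul_nonneg (mul_nonneg (sq_nonneg x) (sq_nonneg (x-1))) (sub_nonneg.2 (Real.cos_le_one (x^3))),
      mul_nonneg (mul_nonneg (sq_nonneg x) (sq_nonneg (x+1))) (sub_nonneg.2 (Real.cos_le_one (x^3))),
      mul_nonneg (sq_nonneg (x-1)) (sub_nonneg.2 (Real.sin_le_one (x^3))),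
      mul_nonneg (sq_nonneg (x+1)) (sub_nonneg.2 (Real.sin_le_one (x^3))),
      mul_nonneg (sq_nonneg (x-1)) (by linarith [Real.neg_one_le_sin (x^3)] : (0:ℝ) ≤ Real.sin (x^3) + 1),
      mul_nonneg (sq_nonneg (x+1)) (by linarith [Real.neg_one_le_sin (x^3)] : (0:ℝ) ≤ Real.sin (x^3) + 1),
      mul_nonneg (mul_nonneg (sq_nonneg x) (sq_nonneg (x-1))) (by linarith [Real.neg_one_le_cos (x^3)] : (0:ℝ) ≤ Real.cos (x^3) + 1),
      mul_nonneg (mul_nonneg (sq_nonneg x) (sq_nonneg (x+1))) (by linarith [Real.neg_one_le_cos (x^3)] : (0:ℝ) ≤ Real.cos (x^3) + 1)]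

/-- Let `(u_n)` be continuously differentiable, compactly supported
functions `u_n : ℝ → ℝ` with `‖u_n g − g‖_∞ → 0` for every continuous function `g`
vanishing at infinity, and `‖u_n'‖_∞ → 0`.  Let `f(x) = sin(x³)/(1+x²)`.  Then `f` is a
bounded Lipschitz function vanishing at infinity, but `‖(f − u_n f)'‖_∞` does not tend
to `0`; hence `(u_n)` is not an approximate unit for the Lipschitz norm. -/
theorem statement8
    (u : ℕ → ℝ → ℝ)
    (hsmooth : ∀ n, ContDiff ℝ 1 (u n))
    (hsupp : ∀ n, HasCompactSupport (u n))
    -- sup-norm approximate unit on C₀(ℝ)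
    (happrox : ∀ g : ℝ → ℝ, Continuous g →
      (∀ ε > (0 : ℝ), ∃ K : Set ℝ, IsCompact K ∧ ∀ x ∉ K, |g x| < ε) →
      ∀ ε > (0 : ℝ), ∃ N : ℕ, ∀ n ≥ N, ∀ x : ℝ, |u n x * g x - g x| ≤ ε)
    -- derivatives tend to zero uniformly
    (hderiv : ∀ ε > (0 : ℝ), ∃ N : ℕ, ∀ n ≥ N, ∀ x : ℝ, |deriv (u n) x| ≤ ε) :
    -- f is bounded
    (∃ M : ℝ, ∀ x : ℝ, |Real.sin (x ^ 3) / (1 + x ^ 2)| ≤ M) ∧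
    -- f is Lipschitz
    (∃ K : NNReal, LipschitzWith K fun x : ℝ => Real.sin (x ^ 3) / (1 + x ^ 2)) ∧
    -- f vanishes at infinity
    (∀ ε > (0 : ℝ), ∃ K : Set ℝ, IsCompact K ∧
      ∀ x ∉ K, |Real.sin (x ^ 3) / (1 + x ^ 2)| < ε) ∧
    -- but ‖(f − u_n f)'‖_∞ does not converge to 0
    ¬ (∀ ε > (0 : ℝ), ∃ N : ℕ, ∀ n ≥ N, ∀ x : ℝ,
        |deriv (fun y : ℝ =>
          Real.sin (y ^ 3) / (1 + y ^ 2) - u n y * (Real.sin (y ^ 3) / (1 + y ^ 2))) x| ≤ ε) := by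
  have hbnd : ∀ x : ℝ, |Real.sin (x ^ 3) / (1 + x ^ 2)| ≤ 1 / (1 + x ^ 2) := by
    intro x
    rw [abs_div, abs_of_pos (by positivity : (0:ℝ) < 1 + x ^ 2)]
    exact div_le_div_of_nonneg_right (Real.abs_sin_le_one _) (by positivity) |>.trans le_rfl
  refine ⟨⟨1, fun x => (hbnd x).trans (by
      rw [div_le_one (by positivity)]; nlinarith [sq_nonneg x])⟩, ?_, ?_, ?_⟩
  · -- Lipschitz
    refine ⟨4, lipschitzWith_of_nnnorm_deriv_le (fun x => (aux_hasDerivAt x).differentiableAt) ?_⟩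
    intro x
    rw [← NNReal.coe_le_coe, coe_nnnorm, Real.norm_eq_abs]
    exact aux_deriv_bound x
  · -- vanishes at infinity
    intro ε hε
    refine ⟨Set.Icc (-(max 1 (1/ε))) (max 1 (1/ε)), isCompact_Icc, fun x hx => ?_⟩
    simp only [Set.mem_Icc, not_and_or, not_le] at hx
    have hx1 : max 1 (1/ε) < |x| := by
      rcases hx with h | h
      · rw [abs_of_neg (by linarith [le_max_left 1 (1/ε)])]; linarith
      · rw [abs_of_pos (by linarith [le_max_left 1 (1/ε)])]; linarith
    have h1 : (1:ℝ) < |x| := lt_of_le_of_lt (le_max_left _ _) hx1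
    have h2 : 1/ε < |x| := lt_of_le_of_lt (le_max_right _ _) hx1
    have hxsq : 1/ε < x ^ 2 := by
      calc 1/ε < |x| := h2
      _ ≤ |x| * |x| := le_mul_of_one_le_left (abs_nonneg x) h1.le
      _ = x ^ 2 := by rw [← abs_mul, ← sq, abs_sq]
    refine lt_of_le_of_lt (hbnd x) ?_
    rw [div_lt_iff₀ (by positivity)]
    have : 1/ε < 1 + x ^ 2 := by linarith
    calc (1:ℝ) = ε * (1/ε) := by field_simp
    _ < ε * (1 + x ^ 2) := by exact mul_lt_mul_of_pos_left this hε
  · -- not an approximate unit for Lipschitz norm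
    intro h
    obtain ⟨N, hN⟩ := h 1 one_pos
    obtain ⟨R, hR⟩ := (hsupp N).isBounded.subset_closedBall 0
    set M : ℝ := max (|R| + 1) 2 with hM
    have hM2 : (2:ℝ) ≤ M := le_max_right _ _
    have hMpos : (0:ℝ) < M := by linarith
    set k : ℕ := ⌈M ^ 3 / (2 * Real.pi)⌉₊ + 1 with hk
    have hπ := Real.pi_pos
    have hk3 : M ^ 3 ≤ 2 * Real.pi * k := by
      have h1 : M ^ 3 / (2 * Real.pi) ≤ k := le_trans (Nat.le_ceil _) (by exact_mod_cast Nat.le_succ _)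
      calc M ^ 3 = (M ^ 3 / (2 * Real.pi)) * (2 * Real.pi) := by field_simp
      _ ≤ k * (2 * Real.pi) := mul_le_mul_of_nonneg_right h1 (by positivity)
      _ = 2 * Real.pi * k := by ring
    set x : ℝ := (2 * Real.pi * k) ^ ((1:ℝ)/3) with hxdef
    have hbase : (0:ℝ) ≤ 2 * Real.pi * k := by positivity
    have hx0 : 0 ≤ x := Real.rpow_nonneg hbase _
    have hx3 : x ^ 3 = 2 * Real.pi * k := by
      rw [hxdef, ← Real.rpow_natCast ((2 * Real.pi * k) ^ ((1:ℝ)/3)) 3, ← Real.rpow_mul hbase]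
      norm_num
    have hxM : M ≤ x := by
      by_contra hc
      push_neg at hc
      have : x ^ 3 < M ^ 3 := by
        apply pow_lt_pow_left₀ hc hx0
        norm_num
      rw [hx3] at this; linarith
    have hxR : |R| < x := by
      have : |R| + 1 ≤ M := le_max_left _ _
      linarith
    have hx2 : (2:ℝ) ≤ x := le_trans hM2 hxM
    -- x is outside the support of u N
    have hnot : x ∉ tsupport (u N) := by
      intro hmem
      have := hR hmem
      rw [Metric.mem_closedBall, Real.dist_eq, sub_zero, abs_of_nonneg hx0] at this
      have : R ≤ |R| := le_abs_self R
      linarith [le_abs_self R, (hR hmem : dist x 0 ≤ R)]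
    have heq : (fun y : ℝ => Real.sin (y ^ 3) / (1 + y ^ 2) - u N y * (Real.sin (y ^ 3) / (1 + y ^ 2)))
        =ᶠ[nhds x] (fun y : ℝ => Real.sin (y ^ 3) / (1 + y ^ 2)) := by
      have h0 : u N =ᶠ[nhds x] 0 := notMem_tsupport_iff_eventuallyEq.mp hnot
      filter_upwards [h0] with y hy
      simp [hy]
    have hderiveq := heq.deriv_eq
    have hcos : Real.cos (x ^ 3) = 1 := by
      rw [hx3, show (2 * Real.pi * (k:ℝ)) = (k:ℝ) * (2 * Real.pi) by ring]
      exact Real.cos_nat_mul_two_pi k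
    have hsin : Real.sin (x ^ 3) = 0 := by
      rw [hx3, show (2 * Real.pi * (k:ℝ)) = (2 * (k:ℝ)) * Real.pi by ring]
      exact_mod_cast Real.sin_nat_mul_pi (2 * k)
    have hval : deriv (fun y : ℝ => Real.sin (y ^ 3) / (1 + y ^ 2)) x = 3 * x ^ 2 * (1 + x ^ 2) / (1 + x ^ 2) ^ 2 := by
      rw [aux_deriv, hcos, hsin]; ring_nf
    have hgt : 1 < deriv (fun y : ℝ => Real.sin (y ^ 3) / (1 + y ^ 2)) x := by
      rw [hval]
      rw [lt_div_iff₀ (by positivity)]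
      nlinarith [sq_nonneg x]
    have := hN N le_rfl x
    rw [hderiveq] at this
    have := (le_abs_self _).trans this
    linarith
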